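/- With the tensor-product setup over GF(3): each of the common fixed spaces C_V(d₁) ∩ C_V(d₂) = span{e⊗e⊗e, e⊗e⊗f}, C_V(d₁) ∩ C_V(d₃) = span{e⊗e⊗e, e⊗e⊗f − e⊗f⊗e}, and C_V(d₂) ∩ C_V(d₃) = span{e⊗e⊗e, f⊗e⊗e + e⊗f⊗e + e⊗e⊗f} has dimension 2. -/

import Mathlib

noncomputable section

open TensorProduct

/-- The field `GF(3)`. -/
abbrev F3 := ZMod 3
/-- The 2-dimensional symplectic space `W` over `GF(3)`. -/
abbrev W := Fin 2 → F3
/-- `V = W ⊗ W ⊗ W`. -/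
abbrev V := W ⊗[F3] (W ⊗[F3] W)

noncomputable instance : AddCommGroup V := inferInstance

/-- The basis vector `e` of `W`. -/
def e : W := ![1, 0]
/-- The basis vector `f` of `W`. -/
def f : W := ![0, 1]

/-- The linear automorphism `d` of `W` with `d e = e`, `d f = e + f`. -/
def d : W →ₗ[F3] W := Matrix.toLin' !![1, 1; 0, 1]
/-- The inverse of `d`: `d⁻¹ e = e`, `d⁻¹ f = f - e`. -/
def dinv : W →ₗ[F3] W := Matrix.toLin' !![1, -1; 0, 1]

/-- `d₁ = d ⊗ 1 ⊗ 1`. -/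
def d₁ : V →ₗ[F3] V := TensorProduct.map d LinearMap.id
/-- `d₂ = d ⊗ d⁻¹ ⊗ 1`. -/
def d₂ : V →ₗ[F3] V := TensorProduct.map d (TensorProduct.map dinv LinearMap.id)
/-- `d₃ = d ⊗ d ⊗ d`. -/
def d₃ : V →ₗ[F3] V := TensorProduct.map d (TensorProduct.map d d)

/-- The alternating form `⟨·,·⟩` on `W` with `⟨e,f⟩ = 1 = -⟨f,e⟩`. -/
def ω : LinearMap.BilinForm F3 W := Matrix.toLinearMap₂' F3 !![0, 1; -1, 0]

/-- The form `B` on `V` with `B(v₁⊗v₂⊗v₃, w₁⊗w₂⊗w₃) = ⟨v₁,w₁⟩⟨v₂,w₂⟩⟨v₃,w₃⟩`. -/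
def B : LinearMap.BilinForm F3 V :=
  LinearMap.BilinForm.tmul ω (LinearMap.BilinForm.tmul ω ω)

/-- The fixed space `C_V(g) = ker (g - 1)`. -/
def CV (g : V →ₗ[F3] V) : Submodule F3 V := LinearMap.ker ((g - (LinearMap.id : V →ₗ[F3] V)))
/-- The commutator space `[V,g] = im (g - 1)`. -/
def comm1 (g : V →ₗ[F3] V) : Submodule F3 V := LinearMap.range ((g - (LinearMap.id : V →ₗ[F3] V)))
/-- The iterated commutator space `[V,g,g] = im ((g - 1)²)`. -/
def comm2 (g : V →ₗ[F3] V) : Submodule F3 V :=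
  LinearMap.range (((g - (LinearMap.id : V →ₗ[F3] V)) ∘ₗ (g - (LinearMap.id : V →ₗ[F3] V))))
/-- A subspace `U` is totally isotropic if `B` vanishes identically on `U × U`. -/
def TotallyIsotropic (U : Submodule F3 V) : Prop := ∀ u ∈ U, ∀ v ∈ U, B u v = 0

set_option maxHeartbeats 2000000
set_option synthInstance.maxHeartbeats 1000000
set_option linter.unreachableTactic false
set_option linter.unusedTactic false
set_option linter.unnecessarySeqFocus false

open Matrix LinearMap Kronecker

abbrev ι3 := Fin 2 × Fin 2 × Fin 2

/-- standard basis of `W` -/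
def bW : Module.Basis (Fin 2) F3 W := Pi.basisFun F3 (Fin 2)
/-- tensor basis of `V` -/
def bV : Module.Basis ι3 F3 V := bW.tensorProduct (bW.tensorProduct bW)

def Md : Matrix (Fin 2) (Fin 2) F3 := !![1,1;0,1]
def Mi : Matrix (Fin 2) (Fin 2) F3 := !![1,-1;0,1]

lemma toMatrix_d : LinearMap.toMatrix bW bW d = Md := by
  rw [show bW = Pi.basisFun F3 (Fin 2) from rfl, LinearMap.toMatrix_eq_toMatrix', d]
  exact LinearMap.toMatrix'_toLin' _

lemma toMatrix_dinv : LinearMap.toMatrix bW bW dinv = Mi := by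
  rw [show bW = Pi.basisFun F3 (Fin 2) from rfl, LinearMap.toMatrix_eq_toMatrix', dinv]
  exact LinearMap.toMatrix'_toLin' _

def A1 : Matrix ι3 ι3 F3 := Md ⊗ₖ (1 : Matrix (Fin 2 × Fin 2) (Fin 2 × Fin 2) F3)
def A2 : Matrix ι3 ι3 F3 := Md ⊗ₖ (Mi ⊗ₖ (1 : Matrix (Fin 2) (Fin 2) F3))
def A3 : Matrix ι3 ι3 F3 := Md ⊗ₖ (Md ⊗ₖ Md)

lemma toMatrix_d1 : LinearMap.toMatrix bV bV d₁ = A1 := by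
  rw [d₁, show bV = bW.tensorProduct (bW.tensorProduct bW) from rfl,
    TensorProduct.toMatrix_map, toMatrix_d, LinearMap.toMatrix_id, A1]

lemma toMatrix_d2 : LinearMap.toMatrix bV bV d₂ = A2 := by
  rw [d₂, show bV = bW.tensorProduct (bW.tensorProduct bW) from rfl,
    TensorProduct.toMatrix_map, TensorProduct.toMatrix_map, toMatrix_d, toMatrix_dinv,
    LinearMap.toMatrix_id, A2]

lemma toMatrix_d3 : LinearMap.toMatrix bV bV d₃ = A3 := by
  rw [d₃, show bV = bW.tensorProduct (bW.tensorProduct bW) from rfl,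
    TensorProduct.toMatrix_map, TensorProduct.toMatrix_map, toMatrix_d, A3]

lemma mem_CV_iff {g : V →ₗ[F3] V} {A : Matrix ι3 ι3 F3}
    (hA : LinearMap.toMatrix bV bV g = A) (x : V) :
    x ∈ CV g ↔ ∀ i, (A *ᵥ ⇑(bV.repr x)) i = bV.repr x i := by
  unfold CV
  rw [LinearMap.mem_ker, LinearMap.sub_apply, LinearMap.id_apply, sub_eq_zero, ← hA]
  constructor
  · intro h i
    rw [LinearMap.toMatrix_mulVec_repr, h]
  · intro h
    apply bV.repr.injective
    ext i
    have := h i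
    rwa [LinearMap.toMatrix_mulVec_repr] at this

lemma e_eq : e = bW 0 := by
  funext i; fin_cases i <;> simp [e, bW]

lemma f_eq : f = bW 1 := by
  funext i; fin_cases i <;> simp [f, bW]

lemma bV_eee : e ⊗ₜ[F3] (e ⊗ₜ[F3] e) = bV (0,0,0) := by
  rw [show bV = bW.tensorProduct (bW.tensorProduct bW) from rfl, Module.Basis.tensorProduct_apply',
    Module.Basis.tensorProduct_apply', e_eq]

lemma bV_eef : e ⊗ₜ[F3] (e ⊗ₜ[F3] f) = bV (0,0,1) := by
  rw [show bV = bW.tensorProduct (bW.tensorProduct bW) from rfl, Module.Basis.tensorProduct_apply',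
    Module.Basis.tensorProduct_apply', e_eq, f_eq]

lemma bV_efe : e ⊗ₜ[F3] (f ⊗ₜ[F3] e) = bV (0,1,0) := by
  rw [show bV = bW.tensorProduct (bW.tensorProduct bW) from rfl, Module.Basis.tensorProduct_apply',
    Module.Basis.tensorProduct_apply', e_eq, f_eq]

lemma bV_fee : f ⊗ₜ[F3] (e ⊗ₜ[F3] e) = bV (1,0,0) := by
  rw [show bV = bW.tensorProduct (bW.tensorProduct bW) from rfl, Module.Basis.tensorProduct_apply',
    Module.Basis.tensorProduct_apply', e_eq, f_eq]
lemma span_case1 : CV d₁ ⊓ CV d₂ = Submodule.span F3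
    {e ⊗ₜ[F3] (e ⊗ₜ[F3] e), e ⊗ₜ[F3] (e ⊗ₜ[F3] f)} := by
  apply le_antisymm
  · intro x hx
    obtain ⟨h1, h2⟩ := Submodule.mem_inf.mp hx
    rw [mem_CV_iff toMatrix_d1] at h1
    rw [mem_CV_iff toMatrix_d2] at h2
    have z100 : bV.repr x (1,0,0) = 0 := by
      have h := h1 (0,0,0)
      simp [A1, Md, Matrix.mulVec, dotProduct, Fintype.sum_prod_type, Fin.sum_univ_two,
        Matrix.kroneckerMap_apply, Matrix.one_apply, -Prod.mk_zero_zero, -Prod.mk_one_one] at h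
      first | exact h | linear_combination h | linear_combination -h
    have z101 : bV.repr x (1,0,1) = 0 := by
      have h := h1 (0,0,1)
      simp [A1, Md, Matrix.mulVec, dotProduct, Fintype.sum_prod_type, Fin.sum_univ_two,
        Matrix.kroneckerMap_apply, Matrix.one_apply, -Prod.mk_zero_zero, -Prod.mk_one_one] at h
      first | exact h | linear_combination h | linear_combination -h
    have z110 : bV.repr x (1,1,0) = 0 := by
      have h := h1 (0,1,0)
      simp [A1, Md, Matrix.mulVec, dotProduct, Fintype.sum_prod_type, Fin.sum_univ_two,
        Matrix.kroneckerMap_apply, Matrix.one_apply, -Prod.mk_zero_zero, -Prod.mk_one_one] at h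
      first | exact h | linear_combination h | linear_combination -h
    have z111 : bV.repr x (1,1,1) = 0 := by
      have h := h1 (0,1,1)
      simp [A1, Md, Matrix.mulVec, dotProduct, Fintype.sum_prod_type, Fin.sum_univ_two,
        Matrix.kroneckerMap_apply, Matrix.one_apply, -Prod.mk_zero_zero, -Prod.mk_one_one] at h
      first | exact h | linear_combination h | linear_combination -h
    have z010 : bV.repr x (0,1,0) = 0 := by
      have h := h2 (0,0,0)
      simp [A2, Md, Mi, Matrix.mulVec, dotProduct, Fintype.sum_prod_type, Fin.sum_univ_two,
        Matrix.kroneckerMap_apply, Matrix.one_apply, -Prod.mk_zero_zero, -Prod.mk_one_one, z100, z110] at h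
      first | exact h | linear_combination h | linear_combination -h
    have z011 : bV.repr x (0,1,1) = 0 := by
      have h := h2 (0,0,1)
      simp [A2, Md, Mi, Matrix.mulVec, dotProduct, Fintype.sum_prod_type, Fin.sum_univ_two,
        Matrix.kroneckerMap_apply, Matrix.one_apply, -Prod.mk_zero_zero, -Prod.mk_one_one, z101, z111] at h
      first | exact h | linear_combination h | linear_combination -h
    rw [Submodule.mem_span_pair]
    refine ⟨bV.repr x (0,0,0), bV.repr x (0,0,1), ?_⟩
    rw [bV_eee, bV_eef]
    have hsum := bV.sum_repr x
    simp only [Fintype.sum_prod_type, Fin.sum_univ_two] at hsum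
    rw [z100, z101, z110, z111, z010, z011] at hsum
    simp only [zero_smul, add_zero, zero_add] at hsum
    exact hsum
  · rw [Submodule.span_le]
    rintro y hy
    simp only [Set.mem_insert_iff, Set.mem_singleton_iff] at hy
    rcases hy with rfl | rfl <;>
      refine Submodule.mem_inf.mpr ⟨?_, ?_⟩ <;>
        [rw [mem_CV_iff toMatrix_d1, bV_eee]; rw [mem_CV_iff toMatrix_d2, bV_eee];
         rw [mem_CV_iff toMatrix_d1, bV_eef]; rw [mem_CV_iff toMatrix_d2, bV_eef]] <;>
      · rintro ⟨i, j, k⟩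
        fin_cases i <;> fin_cases j <;> fin_cases k <;>
          simp [Module.Basis.repr_self, Finsupp.single_apply, A1, A2, Md, Mi, Matrix.mulVec,
            dotProduct, Fintype.sum_prod_type, Fin.sum_univ_two,
            Matrix.kroneckerMap_apply, Matrix.one_apply, -Prod.mk_zero_zero, -Prod.mk_one_one]

section ReverseGens

lemma eee_mem_d1 : e ⊗ₜ[F3] (e ⊗ₜ[F3] e) ∈ CV d₁ := by
  rw [mem_CV_iff toMatrix_d1, bV_eee]
  rintro ⟨i, j, k⟩
  fin_cases i <;> fin_cases j <;> fin_cases k <;>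
    simp [Module.Basis.repr_self, Finsupp.single_apply, A1, Md, Matrix.mulVec, dotProduct,
      Fintype.sum_prod_type, Fin.sum_univ_two, Matrix.kroneckerMap_apply, Matrix.one_apply,
      -Prod.mk_zero_zero, -Prod.mk_one_one] <;> decide

lemma eee_mem_d2 : e ⊗ₜ[F3] (e ⊗ₜ[F3] e) ∈ CV d₂ := by
  rw [mem_CV_iff toMatrix_d2, bV_eee]
  rintro ⟨i, j, k⟩
  fin_cases i <;> fin_cases j <;> fin_cases k <;>
    simp [Module.Basis.repr_self, Finsupp.single_apply, A2, Md, Mi, Matrix.mulVec, dotProduct,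
      Fintype.sum_prod_type, Fin.sum_univ_two, Matrix.kroneckerMap_apply, Matrix.one_apply,
      -Prod.mk_zero_zero, -Prod.mk_one_one] <;> decide

lemma eee_mem_d3 : e ⊗ₜ[F3] (e ⊗ₜ[F3] e) ∈ CV d₃ := by
  rw [mem_CV_iff toMatrix_d3, bV_eee]
  rintro ⟨i, j, k⟩
  fin_cases i <;> fin_cases j <;> fin_cases k <;>
    simp [Module.Basis.repr_self, Finsupp.single_apply, A3, Md, Matrix.mulVec, dotProduct,
      Fintype.sum_prod_type, Fin.sum_univ_two, Matrix.kroneckerMap_apply, Matrix.one_apply,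
      -Prod.mk_zero_zero, -Prod.mk_one_one] <;> decide

lemma eef_mem_d1 : e ⊗ₜ[F3] (e ⊗ₜ[F3] f) ∈ CV d₁ := by
  rw [mem_CV_iff toMatrix_d1, bV_eef]
  rintro ⟨i, j, k⟩
  fin_cases i <;> fin_cases j <;> fin_cases k <;>
    simp [Module.Basis.repr_self, Finsupp.single_apply, A1, Md, Matrix.mulVec, dotProduct,
      Fintype.sum_prod_type, Fin.sum_univ_two, Matrix.kroneckerMap_apply, Matrix.one_apply,
      -Prod.mk_zero_zero, -Prod.mk_one_one] <;> decide

lemma eef_mem_d2 : e ⊗ₜ[F3] (e ⊗ₜ[F3] f) ∈ CV d₂ := by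
  rw [mem_CV_iff toMatrix_d2, bV_eef]
  rintro ⟨i, j, k⟩
  fin_cases i <;> fin_cases j <;> fin_cases k <;>
    simp [Module.Basis.repr_self, Finsupp.single_apply, A2, Md, Mi, Matrix.mulVec, dotProduct,
      Fintype.sum_prod_type, Fin.sum_univ_two, Matrix.kroneckerMap_apply, Matrix.one_apply,
      -Prod.mk_zero_zero, -Prod.mk_one_one] <;> decide

lemma gen2_mem_d1 : e ⊗ₜ[F3] (e ⊗ₜ[F3] f) - e ⊗ₜ[F3] (f ⊗ₜ[F3] e) ∈ CV d₁ := by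
  rw [mem_CV_iff toMatrix_d1, bV_eef, bV_efe]
  rintro ⟨i, j, k⟩
  fin_cases i <;> fin_cases j <;> fin_cases k <;>
    simp [map_sub, Module.Basis.repr_self, Finsupp.single_apply, Finsupp.coe_sub, Pi.sub_apply,
      A1, Md, Matrix.mulVec, dotProduct,
      Fintype.sum_prod_type, Fin.sum_univ_two, Matrix.kroneckerMap_apply, Matrix.one_apply,
      -Prod.mk_zero_zero, -Prod.mk_one_one] <;> decide

lemma gen2_mem_d3 : e ⊗ₜ[F3] (e ⊗ₜ[F3] f) - e ⊗ₜ[F3] (f ⊗ₜ[F3] e) ∈ CV d₃ := by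
  rw [mem_CV_iff toMatrix_d3, bV_eef, bV_efe]
  rintro ⟨i, j, k⟩
  fin_cases i <;> fin_cases j <;> fin_cases k <;>
    simp [map_sub, Module.Basis.repr_self, Finsupp.single_apply, Finsupp.coe_sub, Pi.sub_apply,
      A3, Md, Matrix.mulVec, dotProduct,
      Fintype.sum_prod_type, Fin.sum_univ_two, Matrix.kroneckerMap_apply, Matrix.one_apply,
      -Prod.mk_zero_zero, -Prod.mk_one_one] <;> decide

lemma gen3_mem_d2 :
    f ⊗ₜ[F3] (e ⊗ₜ[F3] e) + e ⊗ₜ[F3] (f ⊗ₜ[F3] e) + e ⊗ₜ[F3] (e ⊗ₜ[F3] f) ∈ CV d₂ := by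
  rw [mem_CV_iff toMatrix_d2, bV_fee, bV_efe, bV_eef]
  rintro ⟨i, j, k⟩
  fin_cases i <;> fin_cases j <;> fin_cases k <;>
    simp [map_add, Module.Basis.repr_self, Finsupp.single_apply, Finsupp.coe_add, Pi.add_apply,
      A2, Md, Mi, Matrix.mulVec, dotProduct,
      Fintype.sum_prod_type, Fin.sum_univ_two, Matrix.kroneckerMap_apply, Matrix.one_apply,
      -Prod.mk_zero_zero, -Prod.mk_one_one] <;> decide

lemma gen3_mem_d3 :
    f ⊗ₜ[F3] (e ⊗ₜ[F3] e) + e ⊗ₜ[F3] (f ⊗ₜ[F3] e) + e ⊗ₜ[F3] (e ⊗ₜ[F3] f) ∈ CV d₃ := by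
  rw [mem_CV_iff toMatrix_d3, bV_fee, bV_efe, bV_eef]
  rintro ⟨i, j, k⟩
  fin_cases i <;> fin_cases j <;> fin_cases k <;>
    simp [map_add, Module.Basis.repr_self, Finsupp.single_apply, Finsupp.coe_add, Pi.add_apply,
      A3, Md, Matrix.mulVec, dotProduct,
      Fintype.sum_prod_type, Fin.sum_univ_two, Matrix.kroneckerMap_apply, Matrix.one_apply,
      -Prod.mk_zero_zero, -Prod.mk_one_one] <;> decide

end ReverseGens

lemma span_case2 : CV d₁ ⊓ CV d₃ = Submodule.span F3
    {e ⊗ₜ[F3] (e ⊗ₜ[F3] e), e ⊗ₜ[F3] (e ⊗ₜ[F3] f) - e ⊗ₜ[F3] (f ⊗ₜ[F3] e)} := by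
  apply le_antisymm
  · intro x hx
    obtain ⟨h1, h3⟩ := Submodule.mem_inf.mp hx
    rw [mem_CV_iff toMatrix_d1] at h1
    rw [mem_CV_iff toMatrix_d3] at h3
    have z100 : bV.repr x (1,0,0) = 0 := by
      have h := h1 (0,0,0)
      simp [A1, Md, Matrix.mulVec, dotProduct, Fintype.sum_prod_type, Fin.sum_univ_two,
        Matrix.kroneckerMap_apply, Matrix.one_apply, -Prod.mk_zero_zero, -Prod.mk_one_one] at h
      first | exact h | linear_combination h | linear_combination -h
    have z101 : bV.repr x (1,0,1) = 0 := by
      have h := h1 (0,0,1)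
      simp [A1, Md, Matrix.mulVec, dotProduct, Fintype.sum_prod_type, Fin.sum_univ_two,
        Matrix.kroneckerMap_apply, Matrix.one_apply, -Prod.mk_zero_zero, -Prod.mk_one_one] at h
      first | exact h | linear_combination h | linear_combination -h
    have z110 : bV.repr x (1,1,0) = 0 := by
      have h := h1 (0,1,0)
      simp [A1, Md, Matrix.mulVec, dotProduct, Fintype.sum_prod_type, Fin.sum_univ_two,
        Matrix.kroneckerMap_apply, Matrix.one_apply, -Prod.mk_zero_zero, -Prod.mk_one_one] at h
      first | exact h | linear_combination h | linear_combination -h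
    have z111 : bV.repr x (1,1,1) = 0 := by
      have h := h1 (0,1,1)
      simp [A1, Md, Matrix.mulVec, dotProduct, Fintype.sum_prod_type, Fin.sum_univ_two,
        Matrix.kroneckerMap_apply, Matrix.one_apply, -Prod.mk_zero_zero, -Prod.mk_one_one] at h
      first | exact h | linear_combination h | linear_combination -h
    have z011 : bV.repr x (0,1,1) = 0 := by
      have h := h3 (0,0,1)
      simp [A3, Md, Matrix.mulVec, dotProduct, Fintype.sum_prod_type, Fin.sum_univ_two,
        Matrix.kroneckerMap_apply, Matrix.one_apply, -Prod.mk_zero_zero, -Prod.mk_one_one,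
        z100, z101, z110, z111] at h
      first | exact h | linear_combination h | linear_combination -h
    have e010 : bV.repr x (0,1,0) = -bV.repr x (0,0,1) := by
      have h := h3 (0,0,0)
      simp [A3, Md, Matrix.mulVec, dotProduct, Fintype.sum_prod_type, Fin.sum_univ_two,
        Matrix.kroneckerMap_apply, Matrix.one_apply, -Prod.mk_zero_zero, -Prod.mk_one_one,
        z100, z101, z110, z111, z011] at h
      first | exact h | linear_combination h | linear_combination -h
    rw [Submodule.mem_span_pair]
    refine ⟨bV.repr x (0,0,0), bV.repr x (0,0,1), ?_⟩
    rw [bV_eee, bV_eef, bV_efe]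
    have hsum := bV.sum_repr x
    simp only [Fintype.sum_prod_type, Fin.sum_univ_two] at hsum
    rw [z100, z101, z110, z111, z011, e010] at hsum
    simp only [zero_smul, add_zero, zero_add] at hsum
    linear_combination (norm := module) hsum
  · rw [Submodule.span_le]
    rintro y hy
    simp only [Set.mem_insert_iff, Set.mem_singleton_iff] at hy
    rcases hy with rfl | rfl
    · exact Submodule.mem_inf.mpr ⟨eee_mem_d1, eee_mem_d3⟩
    · exact Submodule.mem_inf.mpr ⟨gen2_mem_d1, gen2_mem_d3⟩

lemma three_eq_zero : (3 : F3) = 0 := by decide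

lemma span_case3 : CV d₂ ⊓ CV d₃ = Submodule.span F3
    {e ⊗ₜ[F3] (e ⊗ₜ[F3] e),
     f ⊗ₜ[F3] (e ⊗ₜ[F3] e) + e ⊗ₜ[F3] (f ⊗ₜ[F3] e) + e ⊗ₜ[F3] (e ⊗ₜ[F3] f)} := by
  apply le_antisymm
  · intro x hx
    obtain ⟨h2, h3⟩ := Submodule.mem_inf.mp hx
    rw [mem_CV_iff toMatrix_d2] at h2
    rw [mem_CV_iff toMatrix_d3] at h3
    have z110 : bV.repr x (1,1,0) = 0 := by
      have h := h2 (1,0,0)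
      simp [A2, Md, Mi, Matrix.mulVec, dotProduct, Fintype.sum_prod_type, Fin.sum_univ_two,
        Matrix.kroneckerMap_apply, Matrix.one_apply, -Prod.mk_zero_zero, -Prod.mk_one_one] at h
      first | exact h | linear_combination h | linear_combination -h
    have z111 : bV.repr x (1,1,1) = 0 := by
      have h := h2 (1,0,1)
      simp [A2, Md, Mi, Matrix.mulVec, dotProduct, Fintype.sum_prod_type, Fin.sum_univ_two,
        Matrix.kroneckerMap_apply, Matrix.one_apply, -Prod.mk_zero_zero, -Prod.mk_one_one] at h
      first | exact h | linear_combination h | linear_combination -h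
    have z101 : bV.repr x (1,0,1) = 0 := by
      have h := h3 (1,0,0)
      simp [A3, Md, Matrix.mulVec, dotProduct, Fintype.sum_prod_type, Fin.sum_univ_two,
        Matrix.kroneckerMap_apply, Matrix.one_apply, -Prod.mk_zero_zero, -Prod.mk_one_one,
        z110, z111] at h
      first | exact h | linear_combination h | linear_combination -h
    have z011 : bV.repr x (0,1,1) = 0 := by
      have h := h2 (0,0,1)
      simp [A2, Md, Mi, Matrix.mulVec, dotProduct, Fintype.sum_prod_type, Fin.sum_univ_two,
        Matrix.kroneckerMap_apply, Matrix.one_apply, -Prod.mk_zero_zero, -Prod.mk_one_one,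
        z101, z111] at h
      first | exact h | linear_combination h | linear_combination -h
    have e100 : bV.repr x (1,0,0) = bV.repr x (0,1,0) := by
      have h := h2 (0,0,0)
      simp [A2, Md, Mi, Matrix.mulVec, dotProduct, Fintype.sum_prod_type, Fin.sum_univ_two,
        Matrix.kroneckerMap_apply, Matrix.one_apply, -Prod.mk_zero_zero, -Prod.mk_one_one,
        z110] at h
      first | exact h | exact h.symm | linear_combination h | linear_combination -h
    have e001 : bV.repr x (0,0,1) = bV.repr x (0,1,0) := by
      have h := h3 (0,0,0)
      simp [A3, Md, Matrix.mulVec, dotProduct, Fintype.sum_prod_type, Fin.sum_univ_two,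
        Matrix.kroneckerMap_apply, Matrix.one_apply, -Prod.mk_zero_zero, -Prod.mk_one_one,
        z110, z111, z101, z011, e100] at h
      first
      | exact h
      | exact h.symm
      | linear_combination h
      | linear_combination -h
      | linear_combination h - bV.repr x (0,1,0) * three_eq_zero
      | linear_combination -h - bV.repr x (0,1,0) * three_eq_zero
      | linear_combination h + bV.repr x (0,1,0) * three_eq_zero
      | linear_combination -h + bV.repr x (0,1,0) * three_eq_zero
    rw [Submodule.mem_span_pair]
    refine ⟨bV.repr x (0,0,0), bV.repr x (0,1,0), ?_⟩
    rw [bV_eee, bV_fee, bV_efe, bV_eef]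
    have hsum := bV.sum_repr x
    simp only [Fintype.sum_prod_type, Fin.sum_univ_two] at hsum
    rw [z110, z111, z101, z011, e100, e001] at hsum
    simp only [zero_smul, add_zero, zero_add] at hsum
    linear_combination (norm := module) hsum
  · rw [Submodule.span_le]
    rintro y hy
    simp only [Set.mem_insert_iff, Set.mem_singleton_iff] at hy
    rcases hy with rfl | rfl
    · exact Submodule.mem_inf.mpr ⟨eee_mem_d2, eee_mem_d3⟩
    · exact Submodule.mem_inf.mpr ⟨gen3_mem_d2, gen3_mem_d3⟩

lemma finrank_span_pair {v1 v2 : V} (h : LinearIndependent F3 ![v1, v2]) :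
    Module.finrank F3 (Submodule.span F3 {v1, v2} : Submodule F3 V) = 2 := by
  have hr : ({v1, v2} : Set V) = Set.range ![v1, v2] := by
    ext z
    simp only [Set.mem_insert_iff, Set.mem_singleton_iff, Set.mem_range, Fin.exists_fin_two,
      Matrix.cons_val_zero, Matrix.cons_val_one, Matrix.head_cons]
    tauto
  rw [hr, finrank_span_eq_card h, Fintype.card_fin]

lemma li1 : LinearIndependent F3 ![e ⊗ₜ[F3] (e ⊗ₜ[F3] e), e ⊗ₜ[F3] (e ⊗ₜ[F3] f)] := by
  rw [LinearIndependent.pair_iff]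
  intro s t hst
  rw [bV_eee, bV_eef] at hst
  have h0 := DFunLike.congr_fun (congrArg bV.repr hst) (0,0,0)
  have h1 := DFunLike.congr_fun (congrArg bV.repr hst) (0,0,1)
  simp [Module.Basis.repr_self, Finsupp.single_apply, -Prod.mk_zero_zero, -Prod.mk_one_one] at h0 h1
  exact ⟨h0, h1⟩

lemma li2 : LinearIndependent F3
    ![e ⊗ₜ[F3] (e ⊗ₜ[F3] e), e ⊗ₜ[F3] (e ⊗ₜ[F3] f) - e ⊗ₜ[F3] (f ⊗ₜ[F3] e)] := by
  rw [LinearIndependent.pair_iff]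
  intro s t hst
  rw [bV_eee, bV_eef, bV_efe] at hst
  have h0 := DFunLike.congr_fun (congrArg bV.repr hst) (0,0,0)
  have h1 := DFunLike.congr_fun (congrArg bV.repr hst) (0,0,1)
  simp [Module.Basis.repr_self, Finsupp.single_apply, -Prod.mk_zero_zero, -Prod.mk_one_one] at h0 h1
  exact ⟨h0, h1⟩

lemma li3 : LinearIndependent F3
    ![e ⊗ₜ[F3] (e ⊗ₜ[F3] e),
      f ⊗ₜ[F3] (e ⊗ₜ[F3] e) + e ⊗ₜ[F3] (f ⊗ₜ[F3] e) + e ⊗ₜ[F3] (e ⊗ₜ[F3] f)] := by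
  rw [LinearIndependent.pair_iff]
  intro s t hst
  rw [bV_eee, bV_fee, bV_efe, bV_eef] at hst
  have h0 := DFunLike.congr_fun (congrArg bV.repr hst) (0,0,0)
  have h1 := DFunLike.congr_fun (congrArg bV.repr hst) (0,0,1)
  simp [Module.Basis.repr_self, Finsupp.single_apply, -Prod.mk_zero_zero, -Prod.mk_one_one] at h0 h1
  exact ⟨h0, h1⟩
/-- **Lemma 3.1(iv),(v),(vi).** The common fixed spaces
`C_V(d₁) ∩ C_V(d₂) = span{e⊗e⊗e, e⊗e⊗f}`,
`C_V(d₁) ∩ C_V(d₃) = span{e⊗e⊗e, e⊗e⊗f − e⊗f⊗e}` and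
`C_V(d₂) ∩ C_V(d₃) = span{e⊗e⊗e, f⊗e⊗e + e⊗f⊗e + e⊗e⊗f}` each have dimension 2. -/
theorem stmt_8 :
    (CV d₁ ⊓ CV d₂ = Submodule.span F3
      {e ⊗ₜ[F3] (e ⊗ₜ[F3] e), e ⊗ₜ[F3] (e ⊗ₜ[F3] f)} ∧
     Module.finrank F3 (CV d₁ ⊓ CV d₂ : Submodule F3 V) = 2) ∧
    (CV d₁ ⊓ CV d₃ = Submodule.span F3
      {e ⊗ₜ[F3] (e ⊗ₜ[F3] e),
       e ⊗ₜ[F3] (e ⊗ₜ[F3] f) - e ⊗ₜ[F3] (f ⊗ₜ[F3] e)} ∧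
     Module.finrank F3 (CV d₁ ⊓ CV d₃ : Submodule F3 V) = 2) ∧
    (CV d₂ ⊓ CV d₃ = Submodule.span F3
      {e ⊗ₜ[F3] (e ⊗ₜ[F3] e),
       f ⊗ₜ[F3] (e ⊗ₜ[F3] e) + e ⊗ₜ[F3] (f ⊗ₜ[F3] e) + e ⊗ₜ[F3] (e ⊗ₜ[F3] f)} ∧
     Module.finrank F3 (CV d₂ ⊓ CV d₃ : Submodule F3 V) = 2) := by
  refine ⟨⟨span_case1, ?_⟩, ⟨span_case2, ?_⟩, ⟨span_case3, ?_⟩⟩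
  · rw [span_case1]; exact finrank_span_pair li1
  · rw [span_case2]; exact finrank_span_pair li2
  · rw [span_case3]; exact finrank_span_pair li3
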